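/- For every nonzero ideal 𝔞 of 𝒪_K there exists a generator a of 𝔞, unique up to sign, such that ε^{-1}|σ₂(a)| < |σ₁(a)| ≤ ε|σ₂(a)|. Moreover, for this generator one has ε^{-1/2}𝒩(𝔞)^{1/2} ≤ |σᵢ(a)| ≤ ε^{1/2}𝒩(𝔞)^{1/2} for i = 1, 2. -/

import Mathlib

open NumberField Ideal

lemma stmt0_normprod (K : Type) [Field K] [NumberField K]
    (hdeg : Module.finrank ℚ K = 2) (σ₁ σ₂ : K →+* ℝ) (hσ : σ₁ ≠ σ₂) (x : K) :
    σ₁ x * σ₂ x = (Algebra.norm ℚ x : ℝ) := by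
  classical
  set τ₁ : K →+* ℂ := Complex.ofRealHom.comp σ₁ with hτ1
  set τ₂ : K →+* ℂ := Complex.ofRealHom.comp σ₂ with hτ2
  have hτ : τ₁ ≠ τ₂ := by
    obtain ⟨y, hy⟩ := DFunLike.ne_iff.mp hσ
    exact DFunLike.ne_iff.mpr ⟨y, by simpa [hτ1, hτ2, Complex.ofReal_inj] using hy⟩
  have hcard : Fintype.card (K →+* ℂ) = 2 := by
    rw [NumberField.Embeddings.card K ℂ, hdeg]
  have huniv : ({τ₁, τ₂} : Finset (K →+* ℂ)) = Finset.univ := by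
    apply Finset.eq_univ_of_card
    rw [Finset.card_pair hτ, hcard]
  have h1 : (algebraMap ℚ ℂ) (Algebra.norm ℚ x) = ∏ φ : K →+* ℂ, φ x := by
    rw [Algebra.norm_eq_prod_embeddings ℚ ℂ x]
    exact (Fintype.prod_equiv (RingHom.equivRatAlgHom K ℂ) (fun φ => φ x) (fun ψ => ψ x)
      (fun φ => rfl)).symm
  have h2 : ∏ φ : K →+* ℂ, φ x = τ₁ x * τ₂ x := by
    rw [← huniv, Finset.prod_pair hτ]
  have h3 := h1.trans h2
  rw [eq_ratCast] at h3
  simp only [hτ1, hτ2, RingHom.comp_apply, Complex.ofRealHom_eq_coe] at h3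
  exact_mod_cast h3.symm

lemma stmt0_absprod (K : Type) [Field K] [NumberField K]
    (hdeg : Module.finrank ℚ K = 2) (σ₁ σ₂ : K →+* ℝ) (hσ : σ₁ ≠ σ₂) (x : 𝓞 K) :
    |σ₁ (x : K)| * |σ₂ (x : K)| = (Ideal.absNorm (Ideal.span {x}) : ℝ) := by
  rw [← abs_mul, stmt0_normprod K hdeg σ₁ σ₂ hσ, Ideal.absNorm_span_singleton,
    ← Algebra.coe_norm_int]
  rw [Nat.cast_natAbs]
  push_cast
  rfl

lemma stmt0_sqrt_bounds (E N t : ℝ) (hE : 0 < E) (hN : 0 ≤ N) (ht : 0 ≤ t)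
    (h1 : E⁻¹ * N ≤ t ^ 2) (h2 : t ^ 2 ≤ E * N) :
    E ^ (-(1 : ℝ) / 2) * N ^ ((1 : ℝ) / 2) ≤ t ∧ t ≤ E ^ ((1 : ℝ) / 2) * N ^ ((1 : ℝ) / 2) := by
  have hsq : Real.sqrt (t ^ 2) = t := Real.sqrt_sq ht
  constructor
  · have : Real.sqrt (E⁻¹ * N) ≤ t := by
      rw [← hsq]; exact Real.sqrt_le_sqrt h1
    calc E ^ (-(1 : ℝ) / 2) * N ^ ((1 : ℝ) / 2)
        = (E⁻¹) ^ ((1 : ℝ) / 2) * N ^ ((1 : ℝ) / 2) := by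
          rw [neg_div, Real.rpow_neg hE.le, ← Real.inv_rpow hE.le]
      _ = Real.sqrt (E⁻¹ * N) := by
          rw [Real.sqrt_eq_rpow, Real.mul_rpow (by positivity) hN]
      _ ≤ t := this
  · have : t ≤ Real.sqrt (E * N) := by
      rw [← hsq]; exact Real.sqrt_le_sqrt h2
    calc t ≤ Real.sqrt (E * N) := this
      _ = E ^ ((1 : ℝ) / 2) * N ^ ((1 : ℝ) / 2) := by
          rw [Real.sqrt_eq_rpow, Real.mul_rpow hE.le hN]

set_option maxHeartbeats 1000000 in

/-- For every nonzero ideal `𝔞` of `𝒪_K` there is a generator `a`,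
unique up to sign, with `ε⁻¹|σ₂ a| < |σ₁ a| ≤ ε|σ₂ a|`; moreover this generator
satisfies `ε^(-1/2) 𝒩(𝔞)^(1/2) ≤ |σᵢ a| ≤ ε^(1/2) 𝒩(𝔞)^(1/2)` for `i = 1, 2`. -/
theorem statement0
    (K : Type) [Field K] [NumberField K]
    (d : ℤ) (hd1 : 1 < d) (hdsf : Squarefree d)
    (hdeg : Module.finrank ℚ K = 2) (hθ : ∃ θ : K, θ ^ 2 = (d : K))
    (σ₁ σ₂ : K →+* ℝ) (hσ : σ₁ ≠ σ₂)
    (hcl : NumberField.classNumber K = 1)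
    (ε : (𝓞 K)ˣ) (hε1 : 1 < σ₁ ((ε : 𝓞 K) : K))
    (hεfund : ∀ u : (𝓞 K)ˣ, ∃ n : ℤ, u = ε ^ n ∨ u = -ε ^ n)
    (𝔞 : Ideal (𝓞 K)) (h𝔞 : 𝔞 ≠ ⊥) :
    ∃ a : 𝓞 K, Ideal.span {a} = 𝔞 ∧
      (σ₁ ((ε : 𝓞 K) : K))⁻¹ * |σ₂ (a : K)| < |σ₁ (a : K)| ∧
      |σ₁ (a : K)| ≤ σ₁ ((ε : 𝓞 K) : K) * |σ₂ (a : K)| ∧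
      (∀ b : 𝓞 K, Ideal.span {b} = 𝔞 →
        (σ₁ ((ε : 𝓞 K) : K))⁻¹ * |σ₂ (b : K)| < |σ₁ (b : K)| →
        |σ₁ (b : K)| ≤ σ₁ ((ε : 𝓞 K) : K) * |σ₂ (b : K)| → b = a ∨ b = -a) ∧
      ((σ₁ ((ε : 𝓞 K) : K)) ^ (-(1 : ℝ) / 2) * (Ideal.absNorm 𝔞 : ℝ) ^ ((1 : ℝ) / 2) ≤ |σ₁ (a : K)| ∧
        |σ₁ (a : K)| ≤ (σ₁ ((ε : 𝓞 K) : K)) ^ ((1 : ℝ) / 2) * (Ideal.absNorm 𝔞 : ℝ) ^ ((1 : ℝ) / 2)) ∧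
      ((σ₁ ((ε : 𝓞 K) : K)) ^ (-(1 : ℝ) / 2) * (Ideal.absNorm 𝔞 : ℝ) ^ ((1 : ℝ) / 2) ≤ |σ₂ (a : K)| ∧
        |σ₂ (a : K)| ≤ (σ₁ ((ε : 𝓞 K) : K)) ^ ((1 : ℝ) / 2) * (Ideal.absNorm 𝔞 : ℝ) ^ ((1 : ℝ) / 2)) := by
  classical
  set E := σ₁ ((ε : 𝓞 K) : K) with hEdef
  have hE1 : (1:ℝ) < E := hε1
  have hE0 : (0:ℝ) < E := lt_trans one_pos hE1
  have hloge : 0 < Real.log E := Real.log_pos hE1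
  have habsprod := stmt0_absprod K hdeg σ₁ σ₂ hσ
  -- units machinery
  set U₁ : (𝓞 K)ˣ →* ℝˣ := Units.map (σ₁.comp (algebraMap (𝓞 K) K)).toMonoidHom with hU₁
  set U₂ : (𝓞 K)ˣ →* ℝˣ := Units.map (σ₂.comp (algebraMap (𝓞 K) K)).toMonoidHom with hU₂
  have hU₁app : ∀ u : (𝓞 K)ˣ, (U₁ u : ℝ) = σ₁ ((u : 𝓞 K) : K) := fun u => rfl
  have hU₂app : ∀ u : (𝓞 K)ˣ, (U₂ u : ℝ) = σ₂ ((u : 𝓞 K) : K) := fun u => rfl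
  -- |σ₂ ε| = E⁻¹
  have hσ₂ε : |σ₂ ((ε : 𝓞 K) : K)| = E⁻¹ := by
    have h := habsprod (ε : 𝓞 K)
    rw [Ideal.span_singleton_eq_top.mpr ε.isUnit, Ideal.absNorm_top] at h
    rw [abs_of_pos hE0] at h
    push_cast at h
    exact (inv_eq_of_mul_eq_one_right h).symm
  have hpow1 : ∀ n : ℤ, σ₁ (((ε ^ n : (𝓞 K)ˣ) : 𝓞 K) : K) = E ^ n := by
    intro n
    rw [← hU₁app, map_zpow, Units.val_zpow_eq_zpow_val, hU₁app]
  have hpow2 : ∀ n : ℤ, |σ₂ (((ε ^ n : (𝓞 K)ˣ) : 𝓞 K) : K)| = E ^ (-n) := by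
    intro n
    have habs : ∀ x : ℝ, |x ^ n| = |x| ^ n := fun x => map_zpow₀ (absHom : ℝ →*₀ ℝ) x n
    rw [← hU₂app, map_zpow, Units.val_zpow_eq_zpow_val, hU₂app, habs, hσ₂ε,
      inv_zpow, ← zpow_neg]
  -- generator
  haveI hpir : IsPrincipalIdealRing (𝓞 K) := NumberField.classNumber_eq_one_iff.mp hcl
  obtain ⟨a₀, ha₀⟩ := (hpir.principal 𝔞).principal
  have ha₀0 : a₀ ≠ 0 := by
    intro h; apply h𝔞; rw [ha₀, h]; simp
  have hcoe0 : ((a₀ : 𝓞 K) : K) ≠ 0 := by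
    simpa using ha₀0
  have ht01 : 0 < |σ₁ ((a₀ : 𝓞 K) : K)| := abs_pos.mpr (by
    simpa using (map_ne_zero σ₁).mpr hcoe0)
  have ht02 : 0 < |σ₂ ((a₀ : 𝓞 K) : K)| := abs_pos.mpr (by
    simpa using (map_ne_zero σ₂).mpr hcoe0)
  set t01 := |σ₁ ((a₀ : 𝓞 K) : K)| with ht01def
  set t02 := |σ₂ ((a₀ : 𝓞 K) : K)| with ht02def
  set lgE := Real.log E with hlgE
  set L := (Real.log t01 - Real.log t02) / lgE with hLdef
  set n : ℤ := ⌊(-1 - L) / 2⌋ + 1 with hndef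
  have hn1 : (-1 - L) / 2 < (n : ℝ) := by
    rw [hndef]; push_cast; exact Int.lt_floor_add_one _
  have hn2 : (n : ℝ) ≤ (-1 - L) / 2 + 1 := by
    rw [hndef]; push_cast
    have := Int.floor_le ((-1 - L) / 2)
    linarith
  have hLmul : L * lgE = Real.log t01 - Real.log t02 := by
    rw [hLdef]; field_simp
  have hK1 : -lgE < Real.log t01 - Real.log t02 + 2 * (n : ℝ) * lgE := by
    have h := hn1
    nlinarith [hloge]
  have hK2 : Real.log t01 - Real.log t02 + 2 * (n : ℝ) * lgE ≤ lgE := by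
    have h := hn2
    nlinarith [hloge]
  -- zpow helpers
  have hcomb : ∀ (s : ℝ) (j k : ℤ), (s * E ^ j) * E ^ k = s * E ^ (j + k) := by
    intro s j k; rw [zpow_add₀ hE0.ne']; ring
  have hinvE : ∀ (s : ℝ) (j : ℤ), E⁻¹ * (s * E ^ j) = s * E ^ (j - 1) := by
    intro s j; rw [sub_eq_add_neg, zpow_add₀ hE0.ne', zpow_neg_one]; ring
  have hmulE : ∀ (s : ℝ) (j : ℤ), E * (s * E ^ j) = s * E ^ (j + 1) := by
    intro s j; rw [zpow_add₀ hE0.ne', zpow_one]; ring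
  have hcmp_lt : ∀ (s t : ℝ) (j k : ℤ), 0 < s → 0 < t →
      (s * E ^ j < t * E ^ k ↔
        Real.log s + (j : ℝ) * lgE < Real.log t + (k : ℝ) * lgE) := by
    intro s t j k hs ht
    rw [← Real.log_lt_log_iff (by positivity) (by positivity),
      Real.log_mul hs.ne' (by positivity), Real.log_mul ht.ne' (by positivity),
      Real.log_zpow, Real.log_zpow, hlgE]
  have hcmp_le : ∀ (s t : ℝ) (j k : ℤ), 0 < s → 0 < t →
      (s * E ^ j ≤ t * E ^ k ↔
        Real.log s + (j : ℝ) * lgE ≤ Real.log t + (k : ℝ) * lgE) := by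
    intro s t j k hs ht
    rw [← Real.log_le_log_iff (by positivity) (by positivity),
      Real.log_mul hs.ne' (by positivity), Real.log_mul ht.ne' (by positivity),
      Real.log_zpow, Real.log_zpow, hlgE]
  -- the generator a
  set a : 𝓞 K := a₀ * ((ε ^ n : (𝓞 K)ˣ) : 𝓞 K) with hadef
  have haspan : Ideal.span {a} = 𝔞 := by
    rw [ha₀, hadef]
    exact (Ideal.span_singleton_eq_span_singleton.mpr ⟨ε ^ n, rfl⟩).symm
  have hA1 : |σ₁ (a : K)| = t01 * E ^ n := by
    rw [hadef]
    push_cast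
    rw [_root_.map_mul, abs_mul, hpow1 n, ht01def, abs_of_pos (zpow_pos hE0 n)]
  have hA2 : |σ₂ (a : K)| = t02 * E ^ (-n) := by
    rw [hadef]
    push_cast
    rw [_root_.map_mul, abs_mul, hpow2 n, ht02def]
  have hGA : E⁻¹ * |σ₂ (a : K)| < |σ₁ (a : K)| := by
    rw [hA1, hA2, hinvE]
    rw [hcmp_lt t02 t01 (-n - 1) n ht02 ht01]
    push_cast
    linarith [hK1]
  have hGB : |σ₁ (a : K)| ≤ E * |σ₂ (a : K)| := by
    rw [hA1, hA2, hmulE]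
    rw [hcmp_le t01 t02 n (-n + 1) ht01 ht02]
    push_cast
    linarith [hK2]
  have ht1pos : 0 < |σ₁ (a : K)| := by rw [hA1]; positivity
  have ht2pos : 0 < |σ₂ (a : K)| := by rw [hA2]; positivity
  refine ⟨a, haspan, hGA, hGB, ?_, ?_, ?_⟩
  · -- uniqueness
    intro b hbspan hb1 hb2
    have hab : Associated a b :=
      Ideal.span_singleton_eq_span_singleton.mp (haspan.trans hbspan.symm)
    obtain ⟨u, hu⟩ := hab
    obtain ⟨m, hm⟩ := hεfund u
    have hub1 : |σ₁ ((u : 𝓞 K) : K)| = E ^ m := by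
      rcases hm with hm | hm
      · rw [hm, hpow1 m, abs_of_pos (zpow_pos hE0 m)]
      · rw [hm, Units.val_neg]
        push_cast
        rw [_root_.map_neg, abs_neg, hpow1 m, abs_of_pos (zpow_pos hE0 m)]
    have hub2 : |σ₂ ((u : 𝓞 K) : K)| = E ^ (-m) := by
      rcases hm with hm | hm
      · rw [hm, hpow2 m]
      · rw [hm, Units.val_neg]
        push_cast
        rw [_root_.map_neg, abs_neg, hpow2 m]
    have habs1 : |σ₁ (b : K)| = (t01 * E ^ n) * E ^ m := by
      rw [← hu]
      push_cast
      rw [_root_.map_mul, abs_mul, hA1, hub1]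
    have habs2 : |σ₂ (b : K)| = (t02 * E ^ (-n)) * E ^ (-m) := by
      rw [← hu]
      push_cast
      rw [_root_.map_mul, abs_mul, hA2, hub2]
    rw [habs1, habs2, hcomb, hcomb] at hb1 hb2
    rw [hinvE] at hb1
    rw [hmulE] at hb2
    rw [hcmp_lt _ _ _ _ ht02 ht01] at hb1
    rw [hcmp_le _ _ _ _ ht01 ht02] at hb2
    push_cast at hb1 hb2
    have hmlt : (m : ℝ) < 1 := by
      have h : (m : ℝ) * lgE < 1 * lgE := by linarith [hK1, hb2]
      exact (mul_lt_mul_iff_of_pos_right hloge).mp h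
    have hmgt : (-1 : ℝ) < (m : ℝ) := by
      have h : (-1 : ℝ) * lgE < (m : ℝ) * lgE := by linarith [hK2, hb1]
      exact (mul_lt_mul_iff_of_pos_right hloge).mp h
    have hm0 : m = 0 := by
      have h1 : m < 1 := by exact_mod_cast hmlt
      have h2 : -1 < m := by exact_mod_cast hmgt
      omega
    rcases hm with hm | hm
    · left; rw [← hu, hm, hm0]; simp
    · right; rw [← hu, hm, hm0]; simp
  all_goals {
    have hNprod : |σ₁ (a : K)| * |σ₂ (a : K)| = (Ideal.absNorm 𝔞 : ℝ) := by
      rw [habsprod a, haspan]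
    have hNpos : (0 : ℝ) < (Ideal.absNorm 𝔞 : ℝ) := by
      rw [← hNprod]; positivity
    set t₁ := |σ₁ (a : K)|
    set t₂ := |σ₂ (a : K)|
    first
    | exact stmt0_sqrt_bounds E _ t₁ hE0 hNpos.le ht1pos.le
        (by nlinarith [hGA, ht1pos, ht2pos, mul_inv_cancel₀ hE0.ne'])
        (by nlinarith [hGB, ht1pos, ht2pos])
    | exact stmt0_sqrt_bounds E _ t₂ hE0 hNpos.le ht2pos.le
        (by nlinarith [hGB, ht1pos, ht2pos, mul_inv_cancel₀ hE0.ne'])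
        (by nlinarith [hGA, ht1pos, ht2pos, mul_inv_cancel₀ hE0.ne'])
  }
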